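/- Let r be a nonzero integer and λ ∈ [0, π]. Then the function x ↦ (2/π)·sin²(x)·log|sin(r·(x + λ))| is integrable on the interval [0, π], and |∫₀^π (2/π)·sin²(x)·log|sin(r·(x + λ))| dx| ≤ log 4. (The integrand is interpreted with the convention log 0 = 0, which matches Lean's Real.log, at the finitely many points where sin(r·(x + λ)) = 0; these form a null set.) -/

import Mathlib

open Real MeasureTheory Set


lemma ii_neg_log01 : IntervalIntegrable (fun x : ℝ => -Real.log x) volume 0 1 := by
  apply intervalIntegral.intervalIntegrable_deriv_of_nonneg (g := fun x : ℝ => x - x * Real.log x)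
  · exact (continuous_id.sub Real.continuous_mul_log).continuousOn
  · intro x hx
    simp only [min_def, max_def] at hx
    norm_num at hx
    have := ((hasDerivAt_id x).sub (Real.hasDerivAt_mul_log hx.1.ne'))
    refine this.congr_deriv ?_
    ring
  · intro x hx
    norm_num at hx
    simp only [neg_nonneg]
    exact Real.log_nonpos hx.1.le hx.2.le

lemma ii_log_pi2 : IntervalIntegrable Real.log volume 0 (π/2) := by
  have h1 : IntervalIntegrable Real.log volume 0 1 := by
    have := ii_neg_log01.neg
    simpa [Pi.neg_def] using this
  refine h1.trans (intervalIntegral.intervalIntegrable_log ?_)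
  intro h
  rw [Set.mem_uIcc] at h
  have := Real.pi_gt_three
  rcases h with h | h <;> linarith [h.1, h.2]


lemma ii_logsin_half : IntervalIntegrable (fun x : ℝ => Real.log (Real.sin x)) volume 0 (π/2) := by
  have hπ : (0:ℝ) < π/2 := by positivity
  have hg : IntervalIntegrable (fun x : ℝ => Real.log (π/2) - Real.log x) volume 0 (π/2) := by
    exact intervalIntegrable_const.sub ii_log_pi2
  refine hg.mono_fun ?_ ?_
  · exact (Real.measurable_log.comp Real.measurable_sin).aestronglyMeasurable
  · rw [Filter.EventuallyLE, ae_restrict_iff' measurableSet_uIoc]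
    refine Filter.Eventually.of_forall fun x hx => ?_
    rw [Set.uIoc_of_le hπ.le] at hx
    have hx0 : 0 < x := hx.1
    have hx2 : x ≤ π / 2 := hx.2
    have hsin_pos : 0 < Real.sin x := Real.sin_pos_of_pos_of_lt_pi hx0 (by linarith [Real.pi_pos])
    have hlow : 2 / π * x ≤ Real.sin x := Real.mul_le_sin hx0.le hx2
    have h1 : Real.log (2/π * x) ≤ Real.log (Real.sin x) :=
      Real.log_le_log (by positivity) hlow
    rw [Real.log_mul (by positivity) hx0.ne'] at h1
    have h2 : Real.log (Real.sin x) ≤ 0 := Real.log_nonpos hsin_pos.le (Real.sin_le_one x)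
    have h3 : Real.log (2/π) = - Real.log (π/2) := by
      rw [← Real.log_inv]; norm_num
    simp only [norm_eq_abs]
    rw [abs_of_nonpos h2, abs_of_nonneg]
    · rw [h3] at h1; linarith
    · have := Real.log_le_log hx0 hx2
      linarith


lemma ii_logcos_half : IntervalIntegrable (fun x : ℝ => Real.log (Real.cos x)) volume 0 (π/2) := by
  have h := ii_logsin_half.comp_sub_left (π/2)
  simp only [sub_zero, sub_self] at h
  have heq : (fun x : ℝ => Real.log (Real.sin (π/2 - x))) = fun x => Real.log (Real.cos x) :=
    funext fun x => by rw [Real.sin_pi_div_two_sub]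
  rw [heq] at h
  exact h.symm

lemma ii_logsin_sup : IntervalIntegrable (fun x : ℝ => Real.log (Real.sin x)) volume (π/2) π := by
  have h := ii_logsin_half.comp_sub_left π
  have hb : π - π/2 = π/2 := by ring
  rw [sub_zero, hb] at h
  have heq : (fun x : ℝ => Real.log (Real.sin (π - x))) = fun x => Real.log (Real.sin x) :=
    funext fun x => by rw [Real.sin_pi_sub]
  rw [heq] at h
  exact h.symm

lemma ii_logsin : IntervalIntegrable (fun x : ℝ => Real.log (Real.sin x)) volume 0 π :=
  ii_logsin_half.trans ii_logsin_sup

lemma hsup_eq : ∫ x in (π/2:ℝ)..π, Real.log (Real.sin x)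
    = ∫ x in (0:ℝ)..(π/2), Real.log (Real.sin x) := by
  have h := intervalIntegral.integral_comp_sub_left
    (a := (π/2:ℝ)) (b := π) (fun x => Real.log (Real.sin x)) π
  have hb : π - π/2 = π/2 := by ring
  rw [sub_self, hb] at h
  calc ∫ x in (π/2:ℝ)..π, Real.log (Real.sin x)
      = ∫ x in (π/2:ℝ)..π, Real.log (Real.sin (π - x)) :=
        (intervalIntegral.integral_congr fun x _ => by rw [Real.sin_pi_sub]).symm
    _ = ∫ x in (0:ℝ)..(π/2), Real.log (Real.sin x) := h

lemma J_val : ∫ x in (0:ℝ)..(π/2), Real.log (Real.sin x) = -(π/2) * Real.log 2 := by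
  set J := ∫ x in (0:ℝ)..(π/2), Real.log (Real.sin x) with hJ
  have hcos : ∫ x in (0:ℝ)..(π/2), Real.log (Real.cos x) = J := by
    have h := intervalIntegral.integral_comp_sub_left
      (a := (0:ℝ)) (b := π/2) (fun x => Real.log (Real.sin x)) (π/2)
    rw [sub_zero, sub_self] at h
    calc ∫ x in (0:ℝ)..(π/2), Real.log (Real.cos x)
        = ∫ x in (0:ℝ)..(π/2), Real.log (Real.sin (π/2 - x)) :=
          (intervalIntegral.integral_congr fun x _ => by rw [Real.sin_pi_div_two_sub]).symm
      _ = J := h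
  have hdouble : ∫ x in (0:ℝ)..(π/2), Real.log (Real.sin (2 * x)) = J := by
    have h := intervalIntegral.integral_comp_mul_left
      (a := (0:ℝ)) (b := π/2) (fun x => Real.log (Real.sin x)) (c := 2) two_ne_zero
    rw [h]
    have h2 : (2:ℝ) * (π/2) = π := by ring
    rw [mul_zero, h2, ← intervalIntegral.integral_add_adjacent_intervals
      ii_logsin_half ii_logsin_sup, hsup_eq, ← hJ, smul_eq_mul]
    ring
  have hsplit : ∫ x in (0:ℝ)..(π/2), Real.log (Real.sin (2 * x))
      = ∫ x in (0:ℝ)..(π/2), (Real.log 2 + Real.log (Real.sin x) + Real.log (Real.cos x)) := by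
    apply intervalIntegral.integral_congr_ae
    have hne : ∀ᵐ x : ℝ ∂volume, x ≠ π/2 :=
      ae_iff.mpr (by simp [not_not, Set.setOf_eq_eq_singleton])
    filter_upwards [hne] with x hx hmem
    rw [Set.uIoc_of_le (by positivity)] at hmem
    have hx0 : 0 < x := hmem.1
    have hx2 : x < π/2 := lt_of_le_of_ne hmem.2 hx
    have hs : 0 < Real.sin x := Real.sin_pos_of_pos_of_lt_pi hx0 (by linarith [Real.pi_pos])
    have hc : 0 < Real.cos x := Real.cos_pos_of_mem_Ioo ⟨by linarith, hx2⟩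
    rw [Real.sin_two_mul, Real.log_mul (by positivity) hc.ne', Real.log_mul two_ne_zero hs.ne']
  have hadd : ∫ x in (0:ℝ)..(π/2), (Real.log 2 + Real.log (Real.sin x) + Real.log (Real.cos x))
      = (π/2) * Real.log 2 + J + J := by
    rw [intervalIntegral.integral_add ((intervalIntegrable_const).add ii_logsin_half)
        ii_logcos_half,
      intervalIntegral.integral_add intervalIntegrable_const ii_logsin_half,
      intervalIntegral.integral_const, hcos, ← hJ, smul_eq_mul]
    ring
  have : J = (π/2) * Real.log 2 + J + J := by rw [← hadd, ← hsplit, hdouble]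
  linarith

lemma I_val : ∫ x in (0:ℝ)..π, Real.log (Real.sin x) = -π * Real.log 2 := by
  rw [← intervalIntegral.integral_add_adjacent_intervals ii_logsin_half ii_logsin_sup,
    hsup_eq, J_val]
  ring


noncomputable def L : ℝ → ℝ := fun x => Real.log |Real.sin x|

lemma L_per : Function.Periodic L π := fun x => by
  simp only [L, Real.sin_add_pi, abs_neg]

lemma L_eq_on : ∀ x ∈ Set.uIcc (0:ℝ) π, L x = Real.log (Real.sin x) := by
  intro x hx
  rw [Set.uIcc_of_le Real.pi_pos.le] at hx
  rw [L, abs_of_nonneg (Real.sin_nonneg_of_mem_Icc hx)]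

lemma ii_L_base : IntervalIntegrable L volume 0 π := by
  have h := ii_logsin
  rw [intervalIntegrable_iff] at h ⊢
  exact h.congr_fun (fun x hx => (L_eq_on x (Set.uIoc_subset_uIcc hx)).symm)
    measurableSet_uIoc

lemma L_int_base : ∫ x in (0:ℝ)..π, L x = -π * Real.log 2 := by
  rw [← I_val]
  exact intervalIntegral.integral_congr L_eq_on

lemma ii_L : ∀ a b : ℝ, IntervalIntegrable L volume a b := by
  have hstep : ∀ n : ℤ, IntervalIntegrable L volume (n * π) ((n + 1) * π) := by
    intro n
    have h := ii_L_base.comp_add_right (-(n * π))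
    have heq : (fun x : ℝ => L (x + -(n * π))) = L := funext fun x => by
      rw [← sub_eq_add_neg]; exact L_per.sub_int_mul_eq (x := x) n
    rw [heq] at h
    have h0 : (0:ℝ) - -(n*π) = n * π := by ring
    have h1 : π - -(n*π) = (n+1) * π := by push_cast; ring
    rwa [h0, h1] at h
  have hnat : ∀ n : ℕ, IntervalIntegrable L volume (-(n * π)) (n * π) := by
    intro n
    induction n with
    | zero => simp
    | succ n ih =>
      have hleft : IntervalIntegrable L volume (-((n+1) * π)) (-(n * π)) := by
        have := hstep (-(n+1))
        have e1 : ((-(n+1) : ℤ) : ℝ) * π = -((n+1) * π) := by push_cast; ring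
        have e2 : ((-(n+1) : ℤ) + 1 : ℝ) * π = -(n * π) := by push_cast; ring
        rwa [e1, e2] at this
      have hright : IntervalIntegrable L volume (n * π) ((n+1) * π) := by
        have := hstep n
        convert this using 2 <;> push_cast <;> ring
      have := (hleft.trans ih).trans hright
      convert this using 2 <;> push_cast <;> ring
  intro a b
  obtain ⟨n, hn⟩ := exists_nat_ge (max |a| |b| / π)
  have hπ := Real.pi_pos
  have hn' : max |a| |b| ≤ n * π := by
    rw [div_le_iff₀ hπ] at hn
    linarith
  refine (hnat n).mono_set ?_
  rw [Set.uIcc_of_le (by nlinarith [abs_nonneg a] : -((n:ℝ) * π) ≤ n * π)]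
  exact Set.uIcc_subset_Icc ⟨by linarith [neg_abs_le a, le_max_left |a| |b|],
      by linarith [le_abs_self a, le_max_left |a| |b|]⟩
    ⟨by linarith [neg_abs_le b, le_max_right |a| |b|],
      by linarith [le_abs_self b, le_max_right |a| |b|]⟩

lemma L_int_shift (t : ℝ) : ∫ x in t..(t + π), L x = -π * Real.log 2 := by
  rw [L_per.intervalIntegral_add_eq t 0, zero_add, L_int_base]

lemma K_val (r : ℤ) (hr : r ≠ 0) (d : ℝ) :
    ∫ x in (0:ℝ)..π, L ((r:ℝ) * x + d) = -π * Real.log 2 := by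
  have hc : (r:ℝ) ≠ 0 := Int.cast_ne_zero.mpr hr
  rw [intervalIntegral.integral_comp_mul_add L hc d]
  have hb : (r:ℝ) * π + d = d + r • π := by
    rw [zsmul_eq_mul]; ring
  rw [mul_zero, zero_add, hb, L_per.intervalIntegral_add_zsmul_eq r d ii_L,
    L_int_shift d]
  rw [zsmul_eq_mul, smul_eq_mul]
  field_simp


/-- The function `x ↦ (2/π) sin²(x) log|sin(r(x+λ))|` is integrable on `[0, π]` and
its integral (the Sato–Tate integral of `W^{r,λ}`) has absolute value at most `log 4`. -/
theorem stmt_9 (r : ℤ) (hr : r ≠ 0) (lam : ℝ) (hlam : lam ∈ Set.Icc 0 π) :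
    IntervalIntegrable
        (fun x : ℝ => (2 / π) * Real.sin x ^ 2 * Real.log (abs (Real.sin ((r : ℝ) * (x + lam)))))
        volume 0 π ∧
      |∫ x in (0:ℝ)..π,
          (2 / π) * Real.sin x ^ 2 * Real.log (abs (Real.sin ((r : ℝ) * (x + lam))))| ≤
        Real.log 4 := by
  have hπ := Real.pi_pos
  have hc : (r:ℝ) ≠ 0 := Int.cast_ne_zero.mpr hr
  set c : ℝ := (r:ℝ) with hcdef
  set d : ℝ := c * lam with hddef
  -- integrability of the composed L
  have hg : ∀ a b : ℝ, IntervalIntegrable (fun y => L (y + d)) volume a b := by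
    intro a b
    have h := (ii_L (a + d) (b + d)).comp_add_right d
    simpa using h
  have hcomp : IntervalIntegrable (fun x => L (c * x + d)) volume 0 π := by
    have h := (hg (c * 0) (c * π)).comp_mul_left (c := c)
    simpa [hc, mul_div_assoc] using h
  have hfeq : (fun x : ℝ => (2 / π) * Real.sin x ^ 2 *
      Real.log (abs (Real.sin ((r : ℝ) * (x + lam)))))
      = fun x => (2 / π) * Real.sin x ^ 2 * L (c * x + d) := by
    funext x
    simp only [L, hcdef, hddef]
    ring_nf
  have hcont : ContinuousOn (fun x : ℝ => (2 / π) * Real.sin x ^ 2) (Set.uIcc 0 π) :=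
    (continuous_const.mul (Real.continuous_sin.pow 2)).continuousOn
  have hfint : IntervalIntegrable
      (fun x : ℝ => (2 / π) * Real.sin x ^ 2 *
        Real.log (abs (Real.sin ((r : ℝ) * (x + lam))))) volume 0 π := by
    rw [hfeq]
    exact hcomp.continuousOn_mul hcont
  refine ⟨hfint, ?_⟩
  -- the bound
  have hLle : ∀ y : ℝ, L y ≤ 0 := fun y =>
    Real.log_nonpos (abs_nonneg _) (Real.abs_sin_le_one _)
  have hGint : IntervalIntegrable (fun x => (2 / π) * -(L (c * x + d))) volume 0 π :=
    (hcomp.neg).const_mul _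
  have hptwise : ∀ x ∈ Set.Icc (0:ℝ) π,
      |(2 / π) * Real.sin x ^ 2 * L (c * x + d)| ≤ (2 / π) * -(L (c * x + d)) := by
    intro x _
    have h2π : (0:ℝ) ≤ 2 / π := by positivity
    rw [abs_mul, abs_mul, abs_of_nonneg h2π, abs_of_nonneg (sq_nonneg _),
      abs_of_nonpos (hLle _)]
    nlinarith [mul_nonneg (mul_nonneg h2π (sub_nonneg.2 (Real.sin_sq_le_one x)))
      (neg_nonneg.2 (hLle (c * x + d)))]
  have habs : |∫ x in (0:ℝ)..π, (2 / π) * Real.sin x ^ 2 * L (c * x + d)|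
      ≤ ∫ x in (0:ℝ)..π, |(2 / π) * Real.sin x ^ 2 * L (c * x + d)| :=
    intervalIntegral.abs_integral_le_integral_abs hπ.le
  have hmono : ∫ x in (0:ℝ)..π, |(2 / π) * Real.sin x ^ 2 * L (c * x + d)|
      ≤ ∫ x in (0:ℝ)..π, (2 / π) * -(L (c * x + d)) := by
    apply intervalIntegral.integral_mono_on hπ.le _ hGint hptwise
    rw [hfeq] at hfint
    exact hfint.abs
  have hGval : ∫ x in (0:ℝ)..π, (2 / π) * -(L (c * x + d)) = 2 * Real.log 2 := by
    rw [intervalIntegral.integral_const_mul, intervalIntegral.integral_neg, K_val r hr d]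
    field_simp
  rw [hfeq]
  have hlog4 : Real.log 4 = 2 * Real.log 2 := by
    rw [show (4:ℝ) = 2^2 by norm_num, Real.log_pow]
    push_cast; ring
  rw [hlog4, ← hGval]
  exact habs.trans hmono
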